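/- The visual boundary ∂DL_2(q) is not Hausdorff: there exist two distinct points of ∂DL_2(q) and a single sequence of points converging to both. -/

import Mathlib

/-- A vertex of the (q+1)-regular tree with a distinguished end, in the
horocyclic model: a height `k ∈ ℤ` together with a finitely supported
labelling of the levels strictly below `k`. -/
structure TreeVert (q : ℕ) where
  height : ℤ
  labels : ℤ → ℕ
  labels_lt : ∀ n, labels n = 0 ∨ labels n < q
  supp_below : ∀ n, height ≤ n → labels n = 0
  fin_supp : (Function.support labels).Finite

namespace DL

variable {q d : ℕ}

/-- `v` is a child of `u` (one step further from the distinguished end). -/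
abbrev treeAdjUp (u v : TreeVert q) : Prop :=
  v.height = u.height + 1 ∧ ∀ n, n ≠ u.height → v.labels n = u.labels n

/-- The (q+1)-regular tree. -/
def TreeGraph (q : ℕ) : SimpleGraph (TreeVert q) where
  Adj u v := treeAdjUp u v ∨ treeAdjUp v u
  symm := ⟨fun u v h => Or.symm h⟩
  loopless := ⟨by
    intro u h
    rcases h with ⟨h1, _⟩ | ⟨h1, _⟩ <;> omega⟩

/-- The base vertex of the tree. -/
def treeOrigin (q : ℕ) : TreeVert q :=
  ⟨0, fun _ => 0, fun _ => Or.inl rfl, fun _ _ => rfl, by simp⟩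

/-- Vertices of the Diestel–Leader graph `DL_d(q)`:
`d`-tuples of tree vertices whose heights sum to zero. -/
def DLVert (d q : ℕ) : Type :=
  {x : Fin d → TreeVert q // (∑ i, (x i).height) = 0}

/-- The Diestel–Leader graph `DL_d(q)`: an edge ascends in one tree and
descends in another, all other coordinates being fixed. -/
def DLGraph (d q : ℕ) : SimpleGraph (DLVert d q) where
  Adj v w := ∃ i j : Fin d, i ≠ j ∧ treeAdjUp (v.1 i) (w.1 i) ∧ treeAdjUp (w.1 j) (v.1 j) ∧
      ∀ k : Fin d, k ≠ i → k ≠ j → v.1 k = w.1 k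
  symm := ⟨by
    rintro v w ⟨i, j, hij, h1, h2, h3⟩
    exact ⟨j, i, hij.symm, h2, h1, fun k hk1 hk2 => (h3 k hk2 hk1).symm⟩⟩
  loopless := ⟨by
    rintro v ⟨i, j, hij, ⟨h1, _⟩, _⟩
    omega⟩

/-- The base point of `DL_d(q)`. -/
def origin (d q : ℕ) : DLVert d q :=
  ⟨fun _ => treeOrigin q, by simp [treeOrigin]⟩

/-- A geodesic ray in `DL_d(q)` : an isometric embedding of `ℕ`. -/
def IsGeodesicRay (γ : ℕ → DLVert d q) : Prop :=
  ∀ m n : ℕ, m ≤ n → (DLGraph d q).dist (γ m) (γ n) = n - m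

/-- Two rays are asymptotic when they stay at uniformly bounded distance. -/
def Asymptotic (γ γ' : ℕ → DLVert d q) : Prop :=
  ∃ C : ℕ, ∀ n : ℕ, (DLGraph d q).dist (γ n) (γ' n) ≤ C

instance : TopologicalSpace (DLVert d q) := ⊥

/-- Geodesic rays emanating from the origin, with the topology of uniform
convergence on compact sets (= pointwise convergence, the vertex set being
discrete). -/
def RaySpace (d q : ℕ) : Type :=
  {γ : ℕ → DLVert d q // IsGeodesicRay γ ∧ γ 0 = origin d q}

instance : TopologicalSpace (RaySpace d q) := by
  unfold RaySpace; infer_instance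

lemma reachable_origin (γ : RaySpace d q) (n : ℕ) :
    (DLGraph d q).Reachable (origin d q) (γ.1 n) := by
  cases n with
  | zero => rw [γ.2.2]
  | succ n =>
    have h := γ.2.1 0 (n + 1) (Nat.zero_le _)
    have hne : (DLGraph d q).dist (γ.1 0) (γ.1 (n + 1)) ≠ 0 := by
      rw [h]; omega
    have := SimpleGraph.Reachable.of_dist_ne_zero hne
    rwa [γ.2.2] at this

/-- Asymptoticity as an equivalence relation on geodesic rays from the origin. -/
def asympSetoid (d q : ℕ) : Setoid (RaySpace d q) where
  r γ γ' := Asymptotic γ.1 γ'.1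
  iseqv := by
    constructor
    · intro γ
      exact ⟨0, fun n => by simp [SimpleGraph.dist_self]⟩
    · rintro γ γ' ⟨C, hC⟩
      exact ⟨C, fun n => by rw [SimpleGraph.dist_comm]; exact hC n⟩
    · rintro a b c ⟨C1, h1⟩ ⟨C2, h2⟩
      refine ⟨C1 + C2, fun n => ?_⟩
      have hab : (DLGraph d q).Reachable (a.1 n) (b.1 n) :=
        (reachable_origin a n).symm.trans (reachable_origin b n)
      have hbc : (DLGraph d q).Reachable (b.1 n) (c.1 n) :=
        (reachable_origin b n).symm.trans (reachable_origin c n)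
      obtain ⟨p, hp⟩ := hab.exists_walk_length_eq_dist
      obtain ⟨p', hp'⟩ := hbc.exists_walk_length_eq_dist
      calc (DLGraph d q).dist (a.1 n) (c.1 n) ≤ (p.append p').length :=
            SimpleGraph.dist_le _
        _ = (DLGraph d q).dist (a.1 n) (b.1 n) + (DLGraph d q).dist (b.1 n) (c.1 n) := by
            rw [SimpleGraph.Walk.length_append, hp, hp']
        _ ≤ C1 + C2 := Nat.add_le_add (h1 n) (h2 n)

/-- The visual boundary of `DL_d(q)`: asymptotic classes of geodesic rays
from the origin, with the quotient topology. -/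
def Boundary (d q : ℕ) : Type := Quotient (asympSetoid d q)

instance : TopologicalSpace (Boundary d q) := by
  unfold Boundary; infer_instance

/-- A ray in `DL_2(q)` descends for exactly `n` steps in tree `i`
(bottoming out at height `-n`), then ascends forever in tree `i`.
For `n = 0` this says the ray ascends forever in tree `i` with no turn. -/
def DescendsExactly (i : Fin 2) (n : ℕ) (γ : ℕ → DLVert 2 q) : Prop :=
  (∀ t : ℕ, t ≤ n → ((γ t).1 i).height = -(t : ℤ)) ∧
  (∀ t : ℕ, n ≤ t → ((γ t).1 i).height = (t : ℤ) - 2 * n)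

/-- The subset `C_n^i` of the boundary: classes of rays bottoming out in
tree `i` after descending exactly `n` edges. -/
def Cset (q : ℕ) (i : Fin 2) (n : ℕ) : Set (Boundary 2 q) :=
  {x | ∃ γ : RaySpace 2 q, Quotient.mk (asympSetoid 2 q) γ = x ∧ DescendsExactly i n γ.1}

/-- Projection of a path in `DL_d(q)` to the `i`-th tree. -/
def proj (i : Fin d) (γ : ℕ → DLVert d q) : ℕ → TreeVert q := fun n => (γ n).1 i

/-- Two (lazy) paths in the tree converge to the same end: both eventually
leave every ball, and they come within a uniformly bounded distance of each
other at arbitrarily late times. -/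
def SameEnd (a b : ℕ → TreeVert q) : Prop :=
  (∀ R : ℕ, ∃ N : ℕ, ∀ n, N ≤ n → R ≤ (TreeGraph q).dist (a 0) (a n)) ∧
  (∀ R : ℕ, ∃ N : ℕ, ∀ n, N ≤ n → R ≤ (TreeGraph q).dist (b 0) (b n)) ∧
  (∃ C : ℕ, ∀ N : ℕ, ∃ m n, N ≤ m ∧ N ≤ n ∧ (TreeGraph q).dist (a m) (b n) ≤ C)

/-- The step from `p m` to `p (m+1)` descends in tree `i`. -/
def StepDown (i : Fin d) (p : ℕ → DLVert d q) (m : ℕ) : Prop :=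
  treeAdjUp ((p (m + 1)).1 i) ((p m).1 i)

/-- The step from `p m` to `p (m+1)` ascends in tree `i`. -/
def StepUp (i : Fin d) (p : ℕ → DLVert d q) (m : ℕ) : Prop :=
  treeAdjUp ((p m).1 i) ((p (m + 1)).1 i)

/-- A turn in tree `i`: a subpath beginning with a descent in `T_i` at step `t`,
ending with an ascent in `T_i` at step `s`, with no intervening step
involving `T_i`. -/
def IsTurn (i : Fin d) (p : ℕ → DLVert d q) (t s : ℕ) : Prop :=
  t < s ∧ StepDown i p t ∧ StepUp i p s ∧
    ∀ m, t < m → m < s → (p (m + 1)).1 i = (p m).1 i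


section Aux

variable {q : ℕ}

lemma TreeVert.ext' {u v : TreeVert q} (h1 : u.height = v.height)
    (h2 : ∀ n, u.labels n = v.labels n) : u = v := by
  cases u; cases v
  simp only [TreeVert.mk.injEq]
  exact ⟨h1, funext h2⟩

/-- The all-zero-labels vertex at height `h`. -/
def vA (q : ℕ) (h : ℤ) : TreeVert q :=
  ⟨h, fun _ => 0, fun _ => Or.inl rfl, fun _ _ => rfl, by simp⟩

/-- The vertex at height `h` with label `1` on levels in `[a, b)` (where `b ≤ h`). -/
def vB (q : ℕ) (hq : 1 < q) (a b h : ℤ) (hbh : b ≤ h) : TreeVert q :=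
  ⟨h, fun n => if a ≤ n ∧ n < b then 1 else 0,
   fun n => by split
               · exact Or.inr hq
               · exact Or.inl rfl,
   fun n hn => by rw [if_neg]; omega,
   by
     apply Set.Finite.subset (Set.finite_Icc a b)
     intro n hn
     simp only [Function.mem_support, ne_eq, ite_eq_right_iff, not_forall] at hn
     obtain ⟨⟨h1, h2⟩, -⟩ := hn
     exact Set.mem_Icc.2 ⟨h1, h2.le⟩⟩

@[simp] lemma vA_height (h : ℤ) : (vA q h).height = h := rfl
@[simp] lemma vA_labels (h n : ℤ) : (vA q h).labels n = 0 := rfl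
@[simp] lemma vB_height (hq : 1 < q) (a b h : ℤ) (hbh : b ≤ h) :
    (vB q hq a b h hbh).height = h := rfl
lemma vB_labels (hq : 1 < q) (a b h : ℤ) (hbh : b ≤ h) (n : ℤ) :
    (vB q hq a b h hbh).labels n = if a ≤ n ∧ n < b then 1 else 0 := rfl

lemma vB_eq_vA (hq : 1 < q) (a b h : ℤ) (hbh : b ≤ h) (hab : b ≤ a) :
    vB q hq a b h hbh = vA q h := by
  refine TreeVert.ext' rfl fun n => ?_
  rw [vB_labels, vA_labels, if_neg]
  omega

end Aux

section Walks

variable {q : ℕ}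

lemma adj_height' {v w : DLVert 2 q} (h : (DLGraph 2 q).Adj v w) (i : Fin 2) :
    (w.1 i).height ≤ (v.1 i).height + 1 ∧ (v.1 i).height ≤ (w.1 i).height + 1 := by
  obtain ⟨a, b, hab, h1, h2, h3⟩ := h
  by_cases hia : i = a
  · subst hia; have := h1.1; omega
  · by_cases hib : i = b
    · subst hib; have := h2.1; omega
    · rw [h3 i hia hib]; omega

lemma adj_labels' {v w : DLVert 2 q} (h : (DLGraph 2 q).Adj v w) (i : Fin 2) (L : ℤ)
    (hv : L < (v.1 i).height) (hw : L < (w.1 i).height) :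
    (v.1 i).labels L = (w.1 i).labels L := by
  obtain ⟨a, b, hab, h1, h2, h3⟩ := h
  by_cases hia : i = a
  · subst hia; exact (h1.2 L (by omega)).symm
  · by_cases hib : i = b
    · subst hib; exact (h2.2 L (by omega))
    · rw [h3 i hia hib]

lemma walk_height {v w : DLVert 2 q} (p : (DLGraph 2 q).Walk v w) (i : Fin 2) :
    (v.1 i).height - (w.1 i).height ≤ (p.length : ℤ) ∧
    (w.1 i).height - (v.1 i).height ≤ (p.length : ℤ) := by
  induction p with
  | nil => simp
  | @cons a b c h p ih =>
    have := adj_height' h i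
    rw [SimpleGraph.Walk.length_cons]
    push_cast
    omega

lemma walk_labels {v w : DLVert 2 q} (p : (DLGraph 2 q).Walk v w) (i : Fin 2) (L : ℤ)
    (h : ∀ u ∈ p.support, L < (u.1 i).height) :
    (v.1 i).labels L = (w.1 i).labels L := by
  induction p with
  | nil => rfl
  | @cons a b c hadj p ih =>
    have h1 : L < (a.1 i).height := h a (by simp)
    have h2 : L < (b.1 i).height := h b (by simp [SimpleGraph.Walk.support_cons])
    rw [adj_labels' hadj i L h1 h2]
    exact ih (fun u hu => h u (by simp [SimpleGraph.Walk.support_cons, hu]))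

lemma length_ge_of_labels_ne {v w : DLVert 2 q} (p : (DLGraph 2 q).Walk v w) (i : Fin 2)
    (L : ℤ) (h : (v.1 i).labels L ≠ (w.1 i).labels L) :
    ((v.1 i).height - L) + ((w.1 i).height - L) ≤ (p.length : ℤ) := by
  classical
  have hex : ∃ u ∈ p.support, (u.1 i).height ≤ L := by
    by_contra hc
    push_neg at hc
    exact h (walk_labels p i L (fun u hu => hc u hu))
  obtain ⟨u, hu, hle⟩ := hex
  have hsp := congrArg SimpleGraph.Walk.length (p.take_spec hu)
  rw [SimpleGraph.Walk.length_append] at hsp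
  have w1 := walk_height (p.takeUntil u hu) i
  have w2 := walk_height (p.dropUntil u hu) i
  omega

/-- A chain of adjacent vertices gives a walk of the expected length. -/
lemma chain_walk {p : ℕ → DLVert 2 q} (hp : ∀ t, (DLGraph 2 q).Adj (p t) (p (t + 1)))
    (m k : ℕ) : ∃ w : (DLGraph 2 q).Walk (p m) (p (m + k)), w.length = k := by
  induction k with
  | zero => exact ⟨SimpleGraph.Walk.nil, rfl⟩
  | succ k ih =>
    obtain ⟨w, hw⟩ := ih
    exact ⟨w.concat (hp (m + k)), by rw [SimpleGraph.Walk.length_concat, hw]⟩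

/-- A chain with a universal walk-length lower bound is a geodesic ray. -/
lemma geo_of_chain {p : ℕ → DLVert 2 q} (hadj : ∀ t, (DLGraph 2 q).Adj (p t) (p (t + 1)))
    (hlow : ∀ m n : ℕ, m ≤ n → ∀ w : (DLGraph 2 q).Walk (p m) (p n),
      (n : ℤ) - m ≤ (w.length : ℤ)) :
    IsGeodesicRay p := by
  intro m n hmn
  obtain ⟨w, hw⟩ := chain_walk hadj m (n - m)
  have hub := SimpleGraph.dist_le w
  have hr : (DLGraph 2 q).Reachable (p m) (p (m + (n - m))) := ⟨w⟩
  rw [hw, Nat.add_sub_cancel' hmn] at hub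
  rw [Nat.add_sub_cancel' hmn] at hr
  obtain ⟨w', hw'⟩ := hr.exists_walk_length_eq_dist
  have := hlow m n hmn w'
  rw [hw'] at this
  omega

end Walks

section Rays

variable {q : ℕ}

/-- The straight ray ascending in `T₀` with zero labels. -/
def gRay (q : ℕ) : ℕ → DLVert 2 q := fun t =>
  ⟨![vA q t, vA q (-(t : ℤ))], by simp [Fin.sum_univ_two]⟩

/-- The straight ray ascending in `T₀` with label `1` at level `0`. -/
def gRay' (q : ℕ) (hq : 1 < q) : ℕ → DLVert 2 q := fun t =>
  ⟨![vB q hq 0 (min 1 (t : ℤ)) t (min_le_right _ _), vA q (-(t : ℤ))], by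
    simp [Fin.sum_univ_two]⟩

/-- The ray following `gRay` for `k` steps, then turning and ascending in `T₁`
along fresh labels. -/
def rRay (q : ℕ) (hq : 1 < q) (k : ℕ) : ℕ → DLVert 2 q := fun t =>
  ⟨![vA q (min (t : ℤ) (2 * k - t)),
     vB q hq (-(k : ℤ)) ((t : ℤ) - 2 * k) (max (-(t : ℤ)) ((t : ℤ) - 2 * k))
       (le_max_right _ _)], by simp [Fin.sum_univ_two]; omega⟩

/-- The ray following `gRay'` for `k` steps, then turning and ascending in `T₁`
along the same fresh labels as `rRay`. -/
def rRay' (q : ℕ) (hq : 1 < q) (k : ℕ) : ℕ → DLVert 2 q := fun t =>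
  ⟨![vB q hq 0 (min 1 (min (t : ℤ) (2 * k - t))) (min (t : ℤ) (2 * k - t))
       (min_le_right _ _),
     vB q hq (-(k : ℤ)) ((t : ℤ) - 2 * k) (max (-(t : ℤ)) ((t : ℤ) - 2 * k))
       (le_max_right _ _)], by simp [Fin.sum_univ_two]; omega⟩

@[simp] lemma gRay_0 (t : ℕ) : ((gRay q t).1 0) = vA q t := rfl
@[simp] lemma gRay_1 (t : ℕ) : ((gRay q t).1 1) = vA q (-(t : ℤ)) := rfl
@[simp] lemma gRay'_0 (hq : 1 < q) (t : ℕ) :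
    ((gRay' q hq t).1 0) = vB q hq 0 (min 1 (t : ℤ)) t (min_le_right _ _) := rfl
@[simp] lemma gRay'_1 (hq : 1 < q) (t : ℕ) : ((gRay' q hq t).1 1) = vA q (-(t : ℤ)) := rfl
@[simp] lemma rRay_0 (hq : 1 < q) (k t : ℕ) :
    ((rRay q hq k t).1 0) = vA q (min (t : ℤ) (2 * k - t)) := rfl
@[simp] lemma rRay_1 (hq : 1 < q) (k t : ℕ) :
    ((rRay q hq k t).1 1) = vB q hq (-(k : ℤ)) ((t : ℤ) - 2 * k)
      (max (-(t : ℤ)) ((t : ℤ) - 2 * k)) (le_max_right _ _) := rfl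
@[simp] lemma rRay'_0 (hq : 1 < q) (k t : ℕ) :
    ((rRay' q hq k t).1 0) = vB q hq 0 (min 1 (min (t : ℤ) (2 * k - t)))
      (min (t : ℤ) (2 * k - t)) (min_le_right _ _) := rfl
@[simp] lemma rRay'_1 (hq : 1 < q) (k t : ℕ) :
    ((rRay' q hq k t).1 1) = vB q hq (-(k : ℤ)) ((t : ℤ) - 2 * k)
      (max (-(t : ℤ)) ((t : ℤ) - 2 * k)) (le_max_right _ _) := rfl

end Rays

section Adj

variable {q : ℕ}

lemma mkAdj0 {v w : DLVert 2 q} (h0 : treeAdjUp (v.1 0) (w.1 0))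
    (h1 : treeAdjUp (w.1 1) (v.1 1)) : (DLGraph 2 q).Adj v w :=
  ⟨0, 1, by decide, h0, h1, fun k hk0 hk1 => by fin_cases k <;> simp_all⟩

lemma mkAdj1 {v w : DLVert 2 q} (h1 : treeAdjUp (v.1 1) (w.1 1))
    (h0 : treeAdjUp (w.1 0) (v.1 0)) : (DLGraph 2 q).Adj v w :=
  ⟨1, 0, by decide, h1, h0, fun k hk0 hk1 => by fin_cases k <;> simp_all⟩

lemma gRay_adj (t : ℕ) : (DLGraph 2 q).Adj (gRay q t) (gRay q (t + 1)) := by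
  refine mkAdj0 ⟨?_, fun n hn => rfl⟩ ⟨?_, fun n hn => rfl⟩ <;>
    simp only [gRay_0, gRay_1, vA_height] <;> push_cast <;> ring

lemma gRay'_adj (hq : 1 < q) (t : ℕ) :
    (DLGraph 2 q).Adj (gRay' q hq t) (gRay' q hq (t + 1)) := by
  refine mkAdj0 ⟨?_, ?_⟩ ⟨?_, fun n hn => rfl⟩
  · simp only [gRay'_0, vB_height]; push_cast; ring
  · intro n hn
    simp only [gRay'_0, vB_height] at hn ⊢
    rw [vB_labels, vB_labels]
    push_cast at hn ⊢
    split_ifs <;> omega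
  · simp only [gRay'_1, vA_height]; push_cast; ring

lemma rRay_adj (hq : 1 < q) (k t : ℕ) :
    (DLGraph 2 q).Adj (rRay q hq k t) (rRay q hq k (t + 1)) := by
  by_cases htk : t < k
  · refine mkAdj0 ⟨?_, fun n hn => rfl⟩ ⟨?_, ?_⟩
    · simp only [rRay_0, vA_height]; push_cast; omega
    · simp only [rRay_1, vB_height]; push_cast; omega
    · intro n hn
      simp only [rRay_1, vB_height] at hn ⊢
      rw [vB_labels, vB_labels]
      push_cast at hn ⊢
      split_ifs <;> omega
  · refine mkAdj1 ⟨?_, ?_⟩ ⟨?_, fun n hn => rfl⟩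
    · simp only [rRay_1, vB_height]; push_cast; omega
    · intro n hn
      simp only [rRay_1, vB_height] at hn ⊢
      rw [vB_labels, vB_labels]
      push_cast at hn ⊢
      split_ifs <;> omega
    · simp only [rRay_0, vA_height]; push_cast; omega

lemma rRay'_adj (hq : 1 < q) (k t : ℕ) :
    (DLGraph 2 q).Adj (rRay' q hq k t) (rRay' q hq k (t + 1)) := by
  by_cases htk : t < k
  · refine mkAdj0 ⟨?_, ?_⟩ ⟨?_, ?_⟩
    · simp only [rRay'_0, vB_height]; push_cast; omega
    · intro n hn
      simp only [rRay'_0, vB_height] at hn ⊢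
      rw [vB_labels, vB_labels]
      push_cast at hn ⊢
      split_ifs <;> omega
    · simp only [rRay'_1, vB_height]; push_cast; omega
    · intro n hn
      simp only [rRay'_1, vB_height] at hn ⊢
      rw [vB_labels, vB_labels]
      push_cast at hn ⊢
      split_ifs <;> omega
  · refine mkAdj1 ⟨?_, ?_⟩ ⟨?_, ?_⟩
    · simp only [rRay'_1, vB_height]; push_cast; omega
    · intro n hn
      simp only [rRay'_1, vB_height] at hn ⊢
      rw [vB_labels, vB_labels]
      push_cast at hn ⊢
      split_ifs <;> omega
    · simp only [rRay'_0, vB_height]; push_cast; omega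
    · intro n hn
      simp only [rRay'_0, vB_height] at hn ⊢
      rw [vB_labels, vB_labels]
      push_cast at hn ⊢
      split_ifs <;> omega

end Adj

section Geo

variable {q : ℕ}

lemma DLVert.ext'' {v w : DLVert 2 q} (h : ∀ i, v.1 i = w.1 i) : v = w :=
  Subtype.ext (funext h)

lemma gRay_geo : IsGeodesicRay (gRay q) := by
  refine geo_of_chain gRay_adj ?_
  intro m n hmn w
  have := (walk_height w 0).2
  simp only [gRay_0, vA_height] at this
  omega

lemma gRay'_geo (hq : 1 < q) : IsGeodesicRay (gRay' q hq) := by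
  refine geo_of_chain (gRay'_adj hq) ?_
  intro m n hmn w
  have := (walk_height w 0).2
  simp only [gRay'_0, vB_height] at this
  omega

lemma rRay_geo (hq : 1 < q) (k : ℕ) : IsGeodesicRay (rRay q hq k) := by
  refine geo_of_chain (rRay_adj hq k) ?_
  intro m n hmn w
  by_cases h1 : n ≤ k
  · have := (walk_height w 0).2
    simp only [rRay_0, vA_height] at this
    omega
  · by_cases h2 : k ≤ m
    · have := (walk_height w 1).2
      simp only [rRay_1, vB_height] at this
      omega
    · have hne : ((rRay q hq k m).1 1).labels (-(k : ℤ)) ≠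
          ((rRay q hq k n).1 1).labels (-(k : ℤ)) := by
        simp only [rRay_1, vB_labels]
        rw [if_neg (by omega), if_pos (by constructor <;> omega)]
        omega
      have := length_ge_of_labels_ne w 1 (-(k : ℤ)) hne
      simp only [rRay_1, vB_height] at this
      omega

lemma rRay'_geo (hq : 1 < q) (k : ℕ) : IsGeodesicRay (rRay' q hq k) := by
  refine geo_of_chain (rRay'_adj hq k) ?_
  intro m n hmn w
  by_cases h1 : n ≤ k
  · have := (walk_height w 0).2
    simp only [rRay'_0, vB_height] at this
    omega
  · by_cases h2 : k ≤ m
    · have := (walk_height w 1).2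
      simp only [rRay'_1, vB_height] at this
      omega
    · have hne : ((rRay' q hq k m).1 1).labels (-(k : ℤ)) ≠
          ((rRay' q hq k n).1 1).labels (-(k : ℤ)) := by
        simp only [rRay'_1, vB_labels]
        rw [if_neg (by omega), if_pos (by constructor <;> omega)]
        omega
      have := length_ge_of_labels_ne w 1 (-(k : ℤ)) hne
      simp only [rRay'_1, vB_height] at this
      omega

lemma treeOrigin_eq : treeOrigin q = vA q 0 := rfl

lemma gRay_start : gRay q 0 = origin 2 q := by
  refine DLVert.ext'' fun i => ?_
  fin_cases i <;>
  · show vA q _ = treeOrigin q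
    rw [treeOrigin_eq]
    exact TreeVert.ext' (by simp) fun n => rfl

lemma gRay'_start (hq : 1 < q) : gRay' q hq 0 = origin 2 q := by
  refine DLVert.ext'' fun i => ?_
  fin_cases i
  · show vB q hq _ _ _ (min_le_right _ _) = treeOrigin q
    rw [treeOrigin_eq]
    refine TreeVert.ext' (by simp) fun n => ?_
    rw [vB_labels, vA_labels, if_neg (by omega)]
  · show vA q _ = treeOrigin q
    rw [treeOrigin_eq]
    exact TreeVert.ext' (by simp) fun n => rfl

lemma rRay_start (hq : 1 < q) (k : ℕ) : rRay q hq k 0 = origin 2 q := by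
  refine DLVert.ext'' fun i => ?_
  fin_cases i
  · show vA q _ = treeOrigin q
    rw [treeOrigin_eq]
    exact TreeVert.ext' (by simp) fun n => rfl
  · show vB q hq _ _ _ (le_max_right _ _) = treeOrigin q
    rw [treeOrigin_eq]
    refine TreeVert.ext' (by simp) fun n => ?_
    rw [vB_labels, vA_labels, if_neg (by omega)]

lemma rRay'_start (hq : 1 < q) (k : ℕ) : rRay' q hq k 0 = origin 2 q := by
  refine DLVert.ext'' fun i => ?_
  fin_cases i
  · show vB q hq _ _ _ (min_le_right _ _) = treeOrigin q
    rw [treeOrigin_eq]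
    refine TreeVert.ext' (by simp) fun n => ?_
    rw [vB_labels, vA_labels, if_neg (by omega)]
  · show vB q hq _ _ _ (le_max_right _ _) = treeOrigin q
    rw [treeOrigin_eq]
    refine TreeVert.ext' (by simp) fun n => ?_
    rw [vB_labels, vA_labels, if_neg (by omega)]

end Geo

section Eqs

variable {q : ℕ}

/-- After time `2k` the two turning rays coincide. -/
lemma rRay_eq_rRay' (hq : 1 < q) (k t : ℕ) (h : 2 * k ≤ t) :
    rRay q hq k t = rRay' q hq k t := by
  refine DLVert.ext'' fun i => ?_
  fin_cases i
  · show vA q _ = vB q hq _ _ _ (min_le_right _ _)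
    refine TreeVert.ext' rfl fun n => ?_
    rw [vB_labels, vA_labels, if_neg (by omega)]
  · rfl

/-- Up to time `k` the turning ray agrees with the straight ray. -/
lemma rRay_eq_gRay (hq : 1 < q) (k t : ℕ) (h : t ≤ k) :
    rRay q hq k t = gRay q t := by
  refine DLVert.ext'' fun i => ?_
  fin_cases i
  · show vA q _ = vA q _
    exact TreeVert.ext' (by simp; omega) fun n => rfl
  · show vB q hq _ _ _ (le_max_right _ _) = vA q _
    refine TreeVert.ext' (by simp; omega) fun n => ?_
    rw [vB_labels, vA_labels, if_neg (by omega)]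

lemma rRay'_eq_gRay' (hq : 1 < q) (k t : ℕ) (h : t ≤ k) :
    rRay' q hq k t = gRay' q hq t := by
  refine DLVert.ext'' fun i => ?_
  fin_cases i
  · show vB q hq _ _ _ (min_le_right _ _) = vB q hq _ _ _ (min_le_right _ _)
    refine TreeVert.ext' (by simp; omega) fun n => ?_
    rw [vB_labels, vB_labels]
    split_ifs <;> omega
  · show vB q hq _ _ _ (le_max_right _ _) = vA q _
    refine TreeVert.ext' (by simp; omega) fun n => ?_
    rw [vB_labels, vA_labels, if_neg (by omega)]

/-- Two chains from a common start are within `2t` at time `t`. -/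
lemma dist_le_of_chains {p p' : ℕ → DLVert 2 q}
    (hp : ∀ s, (DLGraph 2 q).Adj (p s) (p (s + 1)))
    (hp' : ∀ s, (DLGraph 2 q).Adj (p' s) (p' (s + 1)))
    (h0 : p 0 = p' 0) (t : ℕ) :
    (DLGraph 2 q).dist (p t) (p' t) ≤ 2 * t := by
  obtain ⟨w1, hw1⟩ := chain_walk hp 0 t
  obtain ⟨w2, hw2⟩ := chain_walk hp' 0 t
  have hle := SimpleGraph.dist_le ((w1.reverse.append (w2.copy h0.symm rfl)).copy
    (congrArg p (Nat.zero_add t)) (congrArg p' (Nat.zero_add t)))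
  rwa [SimpleGraph.Walk.length_copy, SimpleGraph.Walk.length_append,
    SimpleGraph.Walk.length_reverse, SimpleGraph.Walk.length_copy, hw1, hw2,
    ← two_mul] at hle

lemma chains_reachable {p p' : ℕ → DLVert 2 q}
    (hp : ∀ s, (DLGraph 2 q).Adj (p s) (p (s + 1)))
    (hp' : ∀ s, (DLGraph 2 q).Adj (p' s) (p' (s + 1)))
    (h0 : p 0 = p' 0) (t : ℕ) :
    (DLGraph 2 q).Reachable (p t) (p' t) := by
  obtain ⟨w1, hw1⟩ := chain_walk hp 0 t
  obtain ⟨w2, hw2⟩ := chain_walk hp' 0 t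
  exact ⟨(w1.reverse.append (w2.copy h0.symm rfl)).copy
    (congrArg p (Nat.zero_add t)) (congrArg p' (Nat.zero_add t))⟩

lemma rr'_asymp (hq : 1 < q) (k : ℕ) :
    Asymptotic (rRay q hq k) (rRay' q hq k) := by
  refine ⟨4 * k, fun t => ?_⟩
  by_cases h : 2 * k ≤ t
  · rw [rRay_eq_rRay' hq k t h, SimpleGraph.dist_self]
    omega
  · have := dist_le_of_chains (rRay_adj hq k) (rRay'_adj hq k)
      (by rw [rRay_start, rRay'_start]) t
    omega

lemma g_not_asymp (hq : 1 < q) : ¬ Asymptotic (gRay q) (gRay' q hq) := by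
  rintro ⟨C, hC⟩
  set n := C + 1 with hn
  have hr : (DLGraph 2 q).Reachable (gRay q n) (gRay' q hq n) :=
    chains_reachable gRay_adj (gRay'_adj hq) (by rw [gRay_start, gRay'_start]) n
  obtain ⟨w, hw⟩ := hr.exists_walk_length_eq_dist
  have hne : ((gRay q n).1 0).labels 0 ≠ ((gRay' q hq n).1 0).labels 0 := by
    simp only [gRay_0, gRay'_0, vA_labels, vB_labels]
    rw [if_pos (by constructor <;> omega)]
    omega
  have := length_ge_of_labels_ne w 0 0 hne
  rw [hw] at this
  simp only [gRay_0, gRay'_0, vA_height, vB_height] at this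
  have := hC n
  omega

end Eqs

section Main

variable {q : ℕ}

def gSpace (q : ℕ) : RaySpace 2 q := ⟨gRay q, gRay_geo, gRay_start⟩
def gSpace' (q : ℕ) (hq : 1 < q) : RaySpace 2 q :=
  ⟨gRay' q hq, gRay'_geo hq, gRay'_start hq⟩
def rSpace (q : ℕ) (hq : 1 < q) (k : ℕ) : RaySpace 2 q :=
  ⟨rRay q hq k, rRay_geo hq k, rRay_start hq k⟩
def rSpace' (q : ℕ) (hq : 1 < q) (k : ℕ) : RaySpace 2 q :=
  ⟨rRay' q hq k, rRay'_geo hq k, rRay'_start hq k⟩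

lemma tendsto_raySpace {p : ℕ → RaySpace 2 q} {γ : RaySpace 2 q}
    (h : ∀ t : ℕ, ∀ᶠ k in Filter.atTop, (p k).1 t = γ.1 t) :
    Filter.Tendsto p Filter.atTop (nhds γ) := by
  have key : Filter.Tendsto (fun k => (p k).1) Filter.atTop (nhds γ.1) := by
    rw [tendsto_pi_nhds]
    intro t
    exact Filter.Tendsto.congr'
      (by filter_upwards [h t] with k hk using hk.symm) tendsto_const_nhds
  exact Topology.IsEmbedding.subtypeVal.tendsto_nhds_iff.2 key

end Main


/-- the visual boundary of `DL_2(q)` is not Hausdorff: there are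
two distinct points and a single sequence converging to both. -/
theorem boundary_not_hausdorff {q : ℕ} (hq : 2 ≤ q) :
    ¬ T2Space (Boundary 2 q) ∧
    ∃ x y : Boundary 2 q, x ≠ y ∧ ∃ u : ℕ → Boundary 2 q,
      Filter.Tendsto u Filter.atTop (nhds x) ∧
      Filter.Tendsto u Filter.atTop (nhds y) := by
  have hq1 : 1 < q := hq
  set x := Quotient.mk (asympSetoid 2 q) (gSpace q) with hx
  set y := Quotient.mk (asympSetoid 2 q) (gSpace' q hq1) with hy
  have hxy : x ≠ y := fun h => g_not_asymp hq1 (Quotient.exact h)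
  have hcont : Continuous (Quotient.mk (asympSetoid 2 q)) := continuous_quotient_mk'
  set u : ℕ → Boundary 2 q := fun k => Quotient.mk (asympSetoid 2 q) (rSpace q hq1 k)
    with hu
  have h1 : Filter.Tendsto (fun k => rSpace q hq1 k) Filter.atTop (nhds (gSpace q)) := by
    refine tendsto_raySpace fun t => ?_
    rw [Filter.eventually_atTop]
    exact ⟨t, fun k hk => rRay_eq_gRay hq1 k t hk⟩
  have h2 : Filter.Tendsto (fun k => rSpace' q hq1 k) Filter.atTop
      (nhds (gSpace' q hq1)) := by
    refine tendsto_raySpace fun t => ?_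
    rw [Filter.eventually_atTop]
    exact ⟨t, fun k hk => rRay'_eq_gRay' hq1 k t hk⟩
  have tx : Filter.Tendsto u Filter.atTop (nhds x) := (hcont.tendsto _).comp h1
  have hueq : u = fun k => Quotient.mk (asympSetoid 2 q) (rSpace' q hq1 k) :=
    funext fun k => Quotient.sound (rr'_asymp hq1 k)
  have ty : Filter.Tendsto u Filter.atTop (nhds y) := by
    rw [hueq]
    exact (hcont.tendsto _).comp h2
  refine ⟨fun hT2 => ?_, x, y, hxy, u, tx, ty⟩
  haveI : T2Space (Quotient (asympSetoid 2 q)) := hT2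
  exact hxy (tendsto_nhds_unique tx ty)

end DL
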